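/- Let f : ℝ^d → ℝ be differentiable and ℓ-gradient Lipschitz with ℓ > 0, let 0 < η ≤ 1/ℓ, let T ≥ 1, and let vectors ζ₀, …, ζ_{T−1} ∈ ℝ^d be given. Define a sequence by x_{t+1} = x_t − η(∇f(x_t) + ζ_t) for t = 0, …, T−1, starting from any x₀ ∈ ℝ^d. Then for every t ≤ T, ‖x_t − x₀‖² ≤ 8ηT·(f(x₀) − f(x_T)) + 50η²T·Σ_{τ=0}^{T−1} ‖ζ_τ‖². -/

import Mathlib

open scoped RealInnerProductSpace

open intervalIntegral in
lemma descent_lemma {d : ℕ} (ℓ : ℝ) (hℓ : 0 ≤ ℓ)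
    (f : EuclideanSpace ℝ (Fin d) → ℝ) (hf : Differentiable ℝ f)
    (hlip : ∀ x y, ‖gradient f x - gradient f y‖ ≤ ℓ * ‖x - y‖)
    (x v : EuclideanSpace ℝ (Fin d)) :
    f (x + v) ≤ f x + ⟪gradient f x, v⟫ + ℓ / 2 * ‖v‖ ^ 2 := by
  set g : ℝ → ℝ := fun t => f (x + t • v) with hg
  have hderiv : ∀ t : ℝ, HasDerivAt g (⟪gradient f (x + t • v), v⟫) t := by
    intro t
    have h1 : HasDerivAt (fun t : ℝ => x + t • v) v t := by
      simpa using ((hasDerivAt_id t).smul_const v).const_add x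
    have h2 := (hf (x + t • v)).hasGradientAt.hasFDerivAt
    have := h2.comp_hasDerivAt t h1
    exact this
  have hgradcont : Continuous fun p => gradient f p := by
    have : LipschitzWith ℓ.toNNReal (fun p => gradient f p) := by
      apply LipschitzWith.of_dist_le_mul
      intro a b
      simp only [dist_eq_norm]
      calc ‖gradient f a - gradient f b‖ ≤ ℓ * ‖a - b‖ := hlip a b
        _ = ℓ.toNNReal * ‖a - b‖ := by rw [Real.coe_toNNReal ℓ hℓ]
    exact this.continuous
  have hcont : Continuous fun t : ℝ => ⟪gradient f (x + t • v), v⟫ := by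
    apply Continuous.inner
    · exact hgradcont.comp (by continuity)
    · exact continuous_const
  have key : g 1 - g 0 = ∫ t in (0:ℝ)..1, ⟪gradient f (x + t • v), v⟫ :=
    (integral_eq_sub_of_hasDerivAt (fun t _ => hderiv t)
      (hcont.intervalIntegrable 0 1)).symm
  have hpt : ∀ t ∈ Set.Icc (0:ℝ) 1,
      ⟪gradient f (x + t • v), v⟫ ≤ ⟪gradient f x, v⟫ + ℓ * t * ‖v‖ ^ 2 := by
    intro t ht
    have h1 : ⟪gradient f (x + t • v) - gradient f x, v⟫
        ≤ ‖gradient f (x + t • v) - gradient f x‖ * ‖v‖ := real_inner_le_norm _ _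
    have h2 : ‖gradient f (x + t • v) - gradient f x‖ ≤ ℓ * (t * ‖v‖) := by
      have := hlip (x + t • v) x
      simpa [norm_smul, abs_of_nonneg ht.1] using this
    have h3 : ⟪gradient f (x + t • v) - gradient f x, v⟫
        = ⟪gradient f (x + t • v), v⟫ - ⟪gradient f x, v⟫ := by
      rw [inner_sub_left]
    nlinarith [norm_nonneg v, mul_le_mul_of_nonneg_right h2 (norm_nonneg v)]
  have hc2 : Continuous fun t : ℝ => ℓ * t * ‖v‖ ^ 2 := by continuity
  have hib : (∫ t in (0:ℝ)..1, (⟪gradient f x, v⟫ + ℓ * t * ‖v‖ ^ 2))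
      = ⟪gradient f x, v⟫ + ℓ / 2 * ‖v‖ ^ 2 := by
    rw [integral_add intervalIntegrable_const (hc2.intervalIntegrable 0 1)]
    have h2 : (∫ t in (0:ℝ)..1, ℓ * t * ‖v‖ ^ 2) = ℓ * ‖v‖ ^ 2 * ∫ t in (0:ℝ)..1, t := by
      rw [← integral_const_mul]; congr 1; ext t; ring
    rw [integral_const, h2, integral_id]
    simp; ring
  have hmono : (∫ t in (0:ℝ)..1, ⟪gradient f (x + t • v), v⟫)
      ≤ ∫ t in (0:ℝ)..1, (⟪gradient f x, v⟫ + ℓ * t * ‖v‖ ^ 2) := by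
    apply integral_mono_on (by norm_num) (hcont.intervalIntegrable 0 1)
    · exact (continuous_const.add hc2).intervalIntegrable 0 1
    · exact hpt
  have hfin : f (x + v) - f x ≤ ⟪gradient f x, v⟫ + ℓ / 2 * ‖v‖ ^ 2 := by
    have h0 : g 0 = f x := by simp [hg]
    have h1 : g 1 = f (x + v) := by simp [hg]
    rw [← h0, ← h1, key]
    exact hmono.trans_eq hib
  linarith

/-- improve or localize: for a noisy gradient descent sequence
`x_{t+1} = x_t - η(∇f(x_t) + ζ_t)` with `η ≤ 1/ℓ` on an `ℓ`-gradient Lipschitz function,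
for all `t ≤ T`,
`‖x_t - x_0‖² ≤ 8ηT(f(x_0) - f(x_T)) + 50η²T Σ_{τ<T} ‖ζ_τ‖²`. -/
theorem improve_or_localize
    {d : ℕ} (ℓ η : ℝ) (hℓ : 0 < ℓ)
    (f : EuclideanSpace ℝ (Fin d) → ℝ) (hf : Differentiable ℝ f)
    (hlip : ∀ x y, ‖gradient f x - gradient f y‖ ≤ ℓ * ‖x - y‖)
    (hη : 0 < η) (hη' : η ≤ 1 / ℓ)
    (T : ℕ) (hT : 1 ≤ T)
    (ζ : ℕ → EuclideanSpace ℝ (Fin d)) (x : ℕ → EuclideanSpace ℝ (Fin d))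
    (hupd : ∀ t < T, x (t + 1) = x t - η • (gradient f (x t) + ζ t)) :
    ∀ t ≤ T,
      ‖x t - x 0‖ ^ 2
        ≤ 8 * η * T * (f (x 0) - f (x T))
          + 50 * η ^ 2 * T * ∑ τ ∈ Finset.range T, ‖ζ τ‖ ^ 2 := by
  have hηℓ : η * ℓ ≤ 1 := by
    rw [le_div_iff₀ hℓ] at hη'; linarith
  -- per-step bound
  have step : ∀ t < T, ‖x (t + 1) - x t‖ ^ 2
      ≤ 4 * η * (f (x t) - f (x (t + 1))) + 4 * η ^ 2 * ‖ζ t‖ ^ 2 := by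
    intro t ht
    set g := gradient f (x t) with hgdef
    set z := ζ t with hzdef
    set w := g + z with hwdef
    have hxv : x (t + 1) = x t + (-(η • w)) := by
      rw [hupd t ht, sub_eq_add_neg]
    have hd := descent_lemma ℓ hℓ.le f hf hlip (x t) (-(η • w))
    rw [← hxv] at hd
    have hinner : ⟪g, -(η • w)⟫ = -(η * ⟪g, w⟫) := by
      rw [inner_neg_right, real_inner_smul_right]
    have hnv : ‖-(η • w)‖ ^ 2 = η ^ 2 * ‖w‖ ^ 2 := by
      rw [norm_neg, norm_smul, mul_pow]
      simp [abs_of_pos hη]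
    rw [hinner, hnv] at hd
    have hI : ⟪g, w⟫ = ‖w‖ ^ 2 - ⟪z, w⟫ := by
      have : ⟪g, w⟫ + ⟪z, w⟫ = ⟪w, w⟫ := by
        rw [hwdef, inner_add_left]
      rw [real_inner_self_eq_norm_sq] at this
      linarith
    have hJ : ⟪z, w⟫ ≤ ‖z‖ * ‖w‖ := real_inner_le_norm z w
    have hΔ : ‖x (t + 1) - x t‖ ^ 2 = η ^ 2 * ‖w‖ ^ 2 := by
      rw [hxv]
      have : x t + -(η • w) - x t = -(η • w) := by abel
      rw [this, hnv]
    rw [hΔ]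
    set A := ‖w‖
    set Z := ‖z‖
    have hA : 0 ≤ A := norm_nonneg _
    have hZ : 0 ≤ Z := norm_nonneg _
    have h1 : ℓ / 2 * (η ^ 2 * A ^ 2) ≤ η / 2 * A ^ 2 := by
      nlinarith [mul_nonneg hη.le (sq_nonneg A)]
    have h2 : Z * A ≤ A ^ 2 / 4 + Z ^ 2 := by nlinarith [sq_nonneg (A - 2 * Z)]
    have h3 : η * ⟪z, w⟫ ≤ η * (Z * A) :=
      mul_le_mul_of_nonneg_left hJ hη.le
    have hI' : η * ⟪g, w⟫ = η * A ^ 2 - η * ⟪z, w⟫ := by rw [hI]; ring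
    have h2η : η * (Z * A) ≤ η * (A ^ 2 / 4 + Z ^ 2) :=
      mul_le_mul_of_nonneg_left h2 hη.le
    have hD : η / 4 * A ^ 2 - η * Z ^ 2 ≤ f (x t) - f (x (t + 1)) := by
      linarith [hd, hI', h3, h2η, h1]
    have hfin := mul_le_mul_of_nonneg_left hD (by positivity : (0:ℝ) ≤ 4 * η)
    linarith [hfin]
  -- summed bound
  have hsum : ∑ τ ∈ Finset.range T, ‖x (τ + 1) - x τ‖ ^ 2
      ≤ 4 * η * (f (x 0) - f (x T)) + 4 * η ^ 2 * ∑ τ ∈ Finset.range T, ‖ζ τ‖ ^ 2 := by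
    calc ∑ τ ∈ Finset.range T, ‖x (τ + 1) - x τ‖ ^ 2
        ≤ ∑ τ ∈ Finset.range T,
            (4 * η * (f (x τ) - f (x (τ + 1))) + 4 * η ^ 2 * ‖ζ τ‖ ^ 2) :=
          Finset.sum_le_sum fun τ hτ => step τ (Finset.mem_range.mp hτ)
      _ = 4 * η * ∑ τ ∈ Finset.range T, (f (x τ) - f (x (τ + 1)))
            + 4 * η ^ 2 * ∑ τ ∈ Finset.range T, ‖ζ τ‖ ^ 2 := by
          rw [Finset.sum_add_distrib, Finset.mul_sum, Finset.mul_sum]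
      _ = 4 * η * (f (x 0) - f (x T)) + 4 * η ^ 2 * ∑ τ ∈ Finset.range T, ‖ζ τ‖ ^ 2 := by
          rw [Finset.sum_range_sub' (fun n => f (x n)) T]
  intro t htT
  have htele : x t - x 0 = ∑ τ ∈ Finset.range t, (x (τ + 1) - x τ) :=
    (Finset.sum_range_sub x t).symm
  have htri : ‖x t - x 0‖ ≤ ∑ τ ∈ Finset.range t, ‖x (τ + 1) - x τ‖ := by
    rw [htele]; exact norm_sum_le _ _
  have hcs : (∑ τ ∈ Finset.range t, ‖x (τ + 1) - x τ‖) ^ 2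
      ≤ t * ∑ τ ∈ Finset.range t, ‖x (τ + 1) - x τ‖ ^ 2 := by
    have h := sq_sum_le_card_mul_sum_sq (s := Finset.range t)
      (f := fun τ => ‖x (τ + 1) - x τ‖)
    simpa using h
  have hmonot : ∑ τ ∈ Finset.range t, ‖x (τ + 1) - x τ‖ ^ 2
      ≤ ∑ τ ∈ Finset.range T, ‖x (τ + 1) - x τ‖ ^ 2 :=
    Finset.sum_le_sum_of_subset_of_nonneg
      (Finset.range_subset_range.mpr htT) (fun i _ _ => sq_nonneg _)
  have hb1 : ‖x t - x 0‖ ^ 2 ≤ (∑ τ ∈ Finset.range t, ‖x (τ + 1) - x τ‖) ^ 2 :=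
    pow_le_pow_left₀ (norm_nonneg _) htri 2
  have hSnn : (0:ℝ) ≤ ∑ τ ∈ Finset.range T, ‖ζ τ‖ ^ 2 :=
    Finset.sum_nonneg fun i _ => sq_nonneg _
  have hDnn : 0 ≤ 4 * η * (f (x 0) - f (x T)) + 4 * η ^ 2 * ∑ τ ∈ Finset.range T, ‖ζ τ‖ ^ 2 :=
    le_trans (Finset.sum_nonneg fun i _ => sq_nonneg _) hsum
  have htT' : (t:ℝ) ≤ T := Nat.cast_le.mpr htT
  have hT1 : (1:ℝ) ≤ T := by exact_mod_cast hT
  have hchain : ‖x t - x 0‖ ^ 2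
      ≤ T * (4 * η * (f (x 0) - f (x T)) + 4 * η ^ 2 * ∑ τ ∈ Finset.range T, ‖ζ τ‖ ^ 2) := by
    have h4 : (t:ℝ) * ∑ τ ∈ Finset.range t, ‖x (τ + 1) - x τ‖ ^ 2
        ≤ T * ∑ τ ∈ Finset.range T, ‖x (τ + 1) - x τ‖ ^ 2 := by
      apply mul_le_mul htT' hmonot (Finset.sum_nonneg fun i _ => sq_nonneg _) (by positivity)
    have h5 := mul_le_mul_of_nonneg_left hsum (by positivity : (0:ℝ) ≤ (T:ℝ))
    linarith
  nlinarith [mul_le_mul_of_nonneg_left hDnn (by linarith : (0:ℝ) ≤ (T:ℝ)),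
    mul_nonneg (mul_nonneg (by positivity : (0:ℝ) ≤ 46 * η ^ 2) (by linarith : (0:ℝ) ≤ (T:ℝ))) hSnn]
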